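/- Let b, f, y ∈ ℝⁿ with bᵀy ≠ 0 and b not parallel to y. Consider g(ρ) = -‖b‖₂‖f + ρy‖₂ + ρ(bᵀy) for ρ ∈ ℝ. Then g is concave, and its maximum value equals -‖P_y(b)‖₂‖P_y(f)‖₂ - (fᵀy)(bᵀy)/(yᵀy), attained at ρ* = -fᵀy/(yᵀy) + sign(bᵀy)·(‖P_y(f)‖₂/‖P_y(b)‖₂)(bᵀy/(yᵀy)) where here bᵀy > 0 is assumed so the sign is +. -/

import Mathlib

open RealInnerProductSpace

set_option maxHeartbeats 1000000 in
/-- With `g(ρ) = -‖b‖₂‖f + ρy‖₂ + ρ(bᵀy)`, the function `g` is concave and its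
maximum equals `-‖P_y(b)‖₂‖P_y(f)‖₂ - (fᵀy)(bᵀy)/(yᵀy)`, attained at
`ρ* = -fᵀy/(yᵀy) + (‖P_y(f)‖₂/‖P_y(b)‖₂)(bᵀy/(yᵀy))` (with `bᵀy > 0`). -/
theorem stmt_12 {n : ℕ} (b f y : EuclideanSpace ℝ (Fin n)) (hy : y ≠ 0)
    (hby : 0 < ⟪b, y⟫)
    (hPb : b - (⟪b, y⟫ / ‖y‖^2) • y ≠ 0) (hPf : f - (⟪f, y⟫ / ‖y‖^2) • y ≠ 0)
    (ρs : ℝ)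
    (hρs : ρs = -⟪f, y⟫ / ⟪y, y⟫ +
      (‖f - (⟪f, y⟫ / ‖y‖^2) • y‖ / ‖b - (⟪b, y⟫ / ‖y‖^2) • y‖) *
        (⟪b, y⟫ / ⟪y, y⟫))
    (hne : f + ρs • y ≠ 0) :
    ConcaveOn ℝ Set.univ (fun ρ : ℝ => -‖b‖ * ‖f + ρ • y‖ + ρ * ⟪b, y⟫) ∧
    (∀ ρ : ℝ, -‖b‖ * ‖f + ρ • y‖ + ρ * ⟪b, y⟫ ≤
      -‖b - (⟪b, y⟫ / ‖y‖^2) • y‖ * ‖f - (⟪f, y⟫ / ‖y‖^2) • y‖ -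
        ⟪f, y⟫ * ⟪b, y⟫ / ⟪y, y⟫) ∧
    -‖b‖ * ‖f + ρs • y‖ + ρs * ⟪b, y⟫ =
      -‖b - (⟪b, y⟫ / ‖y‖^2) • y‖ * ‖f - (⟪f, y⟫ / ‖y‖^2) • y‖ -
        ⟪f, y⟫ * ⟪b, y⟫ / ⟪y, y⟫ := by
  have hY : (0:ℝ) < ‖y‖^2 := by
    have := norm_pos_iff.mpr hy
    positivity
  have hYne : (‖y‖:ℝ)^2 ≠ 0 := ne_of_gt hY
  have hyy : ⟪y, y⟫ = ‖y‖^2 := real_inner_self_eq_norm_sq y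
  set A := ‖b - (⟪b, y⟫ / ‖y‖^2) • y‖ with hAdef
  set B := ‖f - (⟪f, y⟫ / ‖y‖^2) • y‖ with hBdef
  have hA : 0 < A := norm_pos_iff.mpr hPb
  have hB : 0 < B := norm_pos_iff.mpr hPf
  have key : ∀ (v : EuclideanSpace ℝ (Fin n)) (ρ : ℝ),
      ‖v + ρ • y‖^2 = ‖v - (⟪v, y⟫ / ‖y‖^2) • y‖^2
        + (ρ + ⟪v, y⟫ / ‖y‖^2)^2 * ‖y‖^2 := by
    intro v ρ
    set w := v - (⟪v, y⟫ / ‖y‖^2) • y with hw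
    set s := ρ + ⟪v, y⟫ / ‖y‖^2 with hs
    have hdecomp : v + ρ • y = w + s • y := by
      rw [hw, hs, add_smul]
      abel
    have hwy : ⟪w, y⟫ = 0 := by
      rw [hw, inner_sub_left, real_inner_smul_left, hyy]
      field_simp
      ring
    have hinner : ⟪w, s • y⟫ = 0 := by
      rw [real_inner_smul_right, hwy, mul_zero]
    rw [hdecomp, norm_add_sq_real, hinner, norm_smul]
    simp [mul_pow, sq_abs]
  have hb2 : ‖b‖^2 = A^2 + (⟪b, y⟫)^2 / ‖y‖^2 := by
    have h := key b 0
    simp only [zero_smul, add_zero, zero_add] at h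
    rw [h, ← hAdef]
    field_simp
  have hb0 : (0:ℝ) ≤ ‖b‖ := norm_nonneg _
  have hub : ∀ ρ : ℝ, -‖b‖ * ‖f + ρ • y‖ + ρ * ⟪b, y⟫ ≤
      -A * B - ⟪f, y⟫ * ⟪b, y⟫ / ⟪y, y⟫ := by
    intro ρ
    have hN2 := key f ρ
    rw [← hBdef] at hN2
    set N := ‖f + ρ • y‖ with hN
    have hN0 : 0 ≤ N := norm_nonneg _
    set t := ρ + ⟪f, y⟫ / ‖y‖^2 with ht
    clear_value N t
    have hmain : A * B + t * ⟪b, y⟫ ≤ ‖b‖ * N := by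
      rcases le_or_gt (A * B + t * ⟪b, y⟫) 0 with h | h
      · exact h.trans (by positivity)
      · have hsq : (A * B + t * ⟪b, y⟫)^2 ≤ (‖b‖ * N)^2 := by
          have h1 : (‖b‖ * N)^2
              = (A^2 + (⟪b, y⟫)^2 / ‖y‖^2) * (B^2 + t^2 * ‖y‖^2) := by
            rw [mul_pow, hb2, hN2]
          have key2 : (A^2 + (⟪b, y⟫)^2 / ‖y‖^2) * (B^2 + t^2 * ‖y‖^2)
              - (A * B + t * ⟪b, y⟫)^2
              = (A * t * ‖y‖^2 - ⟪b, y⟫ * B)^2 / ‖y‖^2 := by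
            field_simp
            ring
          have hr : (0:ℝ) ≤ (A * t * ‖y‖^2 - ⟪b, y⟫ * B)^2 / ‖y‖^2 := by positivity
          rw [h1]
          linarith
        nlinarith [mul_nonneg hb0 hN0]
    have hρc : ρ * ⟪b, y⟫ = t * ⟪b, y⟫ - ⟪f, y⟫ * ⟪b, y⟫ / ‖y‖^2 := by
      rw [ht]; field_simp; ring
    rw [hyy, hρc]
    nlinarith [hmain]
  have hts : ρs + ⟪f, y⟫ / ‖y‖^2 = (B / A) * (⟪b, y⟫ / ‖y‖^2) := by
    rw [hρs, hyy]; ring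
  have heq : -‖b‖ * ‖f + ρs • y‖ + ρs * ⟪b, y⟫ =
      -A * B - ⟪f, y⟫ * ⟪b, y⟫ / ⟪y, y⟫ := by
    have hN2 := key f ρs
    rw [← hBdef, hts] at hN2
    set N := ‖f + ρs • y‖ with hN
    have hN0 : 0 ≤ N := norm_nonneg _
    set t := (B / A) * (⟪b, y⟫ / ‖y‖^2) with ht
    have ht0 : 0 < t := by positivity
    have hmain : ‖b‖ * N = A * B + t * ⟪b, y⟫ := by
      have h2 : 0 ≤ A * B + t * ⟪b, y⟫ := by positivity
      have hsq : (‖b‖ * N)^2 = (A * B + t * ⟪b, y⟫)^2 := by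
        rw [mul_pow, hb2, hN2, ht]
        field_simp
      calc ‖b‖ * N = Real.sqrt ((‖b‖ * N)^2) :=
            (Real.sqrt_sq (mul_nonneg hb0 hN0)).symm
        _ = Real.sqrt ((A * B + t * ⟪b, y⟫)^2) := by rw [hsq]
        _ = A * B + t * ⟪b, y⟫ := Real.sqrt_sq h2
    have hρc : ρs * ⟪b, y⟫ = t * ⟪b, y⟫ - ⟪f, y⟫ * ⟪b, y⟫ / ‖y‖^2 := by
      have : ρs = t - ⟪f, y⟫ / ‖y‖^2 := by rw [← hts]; ring
      rw [this]; field_simp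
    rw [hyy, hρc]
    nlinarith [hmain]
  refine ⟨⟨convex_univ, ?_⟩, hub, heq⟩
  intro x _ z _ a c ha hc hac
  simp only [smul_eq_mul]
  have hdec : f + (a * x + c * z) • y = a • (f + x • y) + c • (f + z • y) := by
    have h1 : a • (f + x • y) + c • (f + z • y)
        = (a + c) • f + (a * x + c * z) • y := by module
    rw [h1, hac, one_smul, add_comm]
  have hnorm : ‖f + (a * x + c * z) • y‖ ≤ a * ‖f + x • y‖ + c * ‖f + z • y‖ := by
    rw [hdec]
    calc ‖a • (f + x • y) + c • (f + z • y)‖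
        ≤ ‖a • (f + x • y)‖ + ‖c • (f + z • y)‖ := norm_add_le _ _
      _ = a * ‖f + x • y‖ + c * ‖f + z • y‖ := by
          rw [norm_smul, norm_smul, Real.norm_eq_abs, Real.norm_eq_abs,
            abs_of_nonneg ha, abs_of_nonneg hc]
  have := mul_le_mul_of_nonneg_left hnorm hb0
  nlinarith [this]
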